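/- The clone relation ~ on the attribute set M of a formal context is an equivalence relation: it is reflexive, symmetric, and transitive. -/

import Mathlib

open Set

def extentOf {α β : Type*} (I : α → β → Prop) (B : Set β) : Set α :=
  {g | ∀ m ∈ B, I g m}

def intentOf {α β : Type*} (I : α → β → Prop) (A : Set α) : Set β :=
  {m | ∀ g ∈ A, I g m}

def IsIntent {α β : Type*} (I : α → β → Prop) (X : Set β) : Prop :=
  intentOf I (extentOf I X) = X

open scoped Classical in
noncomputable def phi {β : Type*} (a b : β) (X : Set β) : Set β :=
  if a ∈ X ∧ b ∉ X then X \ {a} ∪ {b}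
  else if b ∈ X ∧ a ∉ X then X \ {b} ∪ {a}
  else X

def Clone {α β : Type*} (I : α → β → Prop) (a b : β) : Prop :=
  ∀ X : Set β, IsIntent I X → IsIntent I (phi a b X)

def objDer {α β : Type*} (I : α → β → Prop) (g : α) : Set β := {m | I g m}

open scoped Classical in
lemma phi_eq_preimage {β : Type*} (a b : β) (X : Set β) :
    phi a b X = Equiv.swap a b ⁻¹' X := by
  ext x
  unfold phi
  by_cases hx : x = a <;> by_cases hx' : x = b <;>
    simp [Equiv.swap_apply_def, hx, hx'] <;> split_ifs <;> simp_all <;> tauto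

open scoped Classical in
lemma swap_conj {β : Type*} {a b c : β} (hab : a ≠ b) (hbc : b ≠ c) (hac : a ≠ c) (x : β) :
    Equiv.swap a b (Equiv.swap b c (Equiv.swap a b x)) = Equiv.swap a c x := by
  by_cases h1 : x = a <;> by_cases h2 : x = b <;> by_cases h3 : x = c <;>
    simp_all [Equiv.swap_apply_def] <;> split_ifs <;> simp_all

lemma phi_self {β : Type*} (a : β) (X : Set β) : phi a a X = X := by
  rw [phi_eq_preimage]
  simp

open scoped Classical in
lemma phi_comm {β : Type*} (a b : β) (X : Set β) : phi a b X = phi b a X := by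
  rw [phi_eq_preimage, phi_eq_preimage, Equiv.swap_comm]

/-- The clone relation ~ on the attribute set of a formal context
is an equivalence relation. -/
theorem clone_equivalence {α β : Type*} (I : α → β → Prop) :
    Equivalence (Clone I) := by
  constructor
  · intro a X hX
    rwa [phi_self]
  · intro a b h X hX
    rw [phi_comm]
    exact h X hX
  · intro a b c hab hbc
    by_cases h1 : a = b
    · subst h1; exact hbc
    by_cases h2 : b = c
    · subst h2; exact hab
    by_cases h3 : a = c
    · subst h3; intro X hX; rwa [phi_self]
    intro X hX
    have key : phi a c X = phi a b (phi b c (phi a b X)) := by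
      simp only [phi_eq_preimage, Set.preimage_preimage]
      congr 1
      ext x
      simp [swap_conj h1 h2 h3 x]
    rw [key]
    exact hab _ (hbc _ (hab _ hX))
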